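/- If G is a finite simple graph of order n(G) with ξ(S_G²) = ι(S_G²), and t ≥ 2 is an integer, then ι(S_G^t) ≤ ι(S_G²)·n(G)^{t−2}. -/

import Mathlib

/-- The closed neighborhood `N[A]` of a set of vertices. -/
def closedNbhd {V : Type*} (G : SimpleGraph V) (A : Set V) : Set V :=
  {v | v ∈ A ∨ ∃ a ∈ A, G.Adj a v}

/-- A set of vertices is independent if it contains no edge. -/
def IndepSet {V : Type*} (G : SimpleGraph V) (S : Set V) : Prop :=
  ∀ u ∈ S, ∀ v ∈ S, ¬ G.Adj u v

/-- `A` is isolating if the vertices outside `N[A]` form an independent set. -/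
def IsIsolating {V : Type*} (G : SimpleGraph V) (A : Set V) : Prop :=
  IndepSet G (closedNbhd G A)ᶜ

/-- The isolation number `ι(G)`. -/
noncomputable def isolationNum {V : Type*} (G : SimpleGraph V) : ℕ :=
  sInf {n | ∃ A : Set V, IsIsolating G A ∧ A.ncard = n}

/-- `D` is a dominating set if `N[D] = V(G)`. -/
def IsDominating {V : Type*} (G : SimpleGraph V) (D : Set V) : Prop :=
  closedNbhd G D = Set.univ

/-- The domination number `γ(G)`. -/
noncomputable def dominationNum {V : Type*} (G : SimpleGraph V) : ℕ :=
  sInf {n | ∃ D : Set V, IsDominating G D ∧ D.ncard = n}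
/-- The generalized Sierpiński graph `S_G^t` on words of length `t` over `V(G)`. -/
def sierpinskiGraph {V : Type*} (G : SimpleGraph V) (t : ℕ) : SimpleGraph (Fin t → V) where
  Adj u v := ∃ i : Fin t, (∀ j, j < i → u j = v j) ∧ u i ≠ v i ∧ G.Adj (u i) (v i) ∧
      ∀ j, i < j → u j = v i ∧ v j = u i
  symm := by
    constructor
    rintro u v ⟨i, h1, h2, h3, h4⟩
    exact ⟨i, fun j hj => (h1 j hj).symm, h2.symm, h3.symm,
      fun j hj => ⟨(h4 j hj).2, (h4 j hj).1⟩⟩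
  loopless := by
    constructor
    rintro u ⟨i, -, h2, -, -⟩
    exact h2 rfl

/-- The extreme vertices of `S_G^t`: the constant words. -/
def extremeVertices (V : Type*) (t : ℕ) : Set (Fin t → V) :=
  {w | ∃ x : V, w = fun _ => x}
/-- `ξ(S_G²)`: the minimum size of an isolating set `D` of `S_G²` of size at most
`γ(S_G²)` such that no two extreme vertices `ii`, `jj` with `ij ∈ E(G)` both lie
outside `N[D]`. -/
noncomputable def xiNum {V : Type*} (G : SimpleGraph V) : ℕ :=
  sInf {n | ∃ D : Set (Fin 2 → V), IsIsolating (sierpinskiGraph G 2) D ∧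
      D.ncard ≤ dominationNum (sierpinskiGraph G 2) ∧
      (∀ i j : V, ((fun _ => i) : Fin 2 → V) ∉ closedNbhd (sierpinskiGraph G 2) D →
        ((fun _ => j) : Fin 2 → V) ∉ closedNbhd (sierpinskiGraph G 2) D → ¬ G.Adj i j) ∧
      D.ncard = n}

/-- The embedding of the last two coordinates. -/
def embLast (s : ℕ) (k : Fin 2) : Fin (s + 2) := ⟨s + k.1, by have := k.2; omega⟩

/-- Gluing a prefix of length `s` with a suffix of length 2. -/
def glueWord {V : Type*} (s : ℕ) (p : Fin s → V) (d : Fin 2 → V) : Fin (s + 2) → V :=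
  fun j => if h : j.1 < s then p ⟨j.1, h⟩ else d ⟨j.1 - s, by have := j.2; omega⟩

lemma glueWord_comp {V : Type*} (s : ℕ) (p : Fin s → V) (d : Fin 2 → V) :
    glueWord s p d ∘ embLast s = d := by
  funext k
  have hns : ¬ (embLast s k).1 < s := by simp [embLast]
  show glueWord s p d (embLast s k) = d k
  rw [glueWord, dif_neg hns]
  congr 1
  ext
  simp [embLast]

lemma lift_mem_closedNbhd {V : Type*} (G : SimpleGraph V) (D : Set (Fin 2 → V)) (s : ℕ)
    (w : Fin (s + 2) → V)
    (hw : (w ∘ embLast s) ∈ closedNbhd (sierpinskiGraph G 2) D) :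
    w ∈ closedNbhd (sierpinskiGraph G (s + 2))
      {u : Fin (s + 2) → V | u ∘ embLast s ∈ D} := by
  rcases hw with h | ⟨a, ha, i, h1, h2, h3, h4⟩
  · exact Or.inl h
  · set w' : Fin (s + 2) → V := glueWord s (fun j => w ⟨j.1, by have := j.2; omega⟩) a with hw'
    have hw'e : ∀ k : Fin 2, w' (embLast s k) = a k := fun k =>
      congrFun (glueWord_comp s _ a) k
    refine Or.inr ⟨w', ?_, ?_⟩
    · show w' ∘ embLast s ∈ D
      rw [hw', glueWord_comp]
      exact ha
    · refine ⟨embLast s i, ?_, ?_, ?_, ?_⟩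
      · intro j hj
        rw [Fin.lt_def] at hj
        simp only [embLast] at hj
        by_cases hjs : j.1 < s
        · simp [hw', glueWord, hjs]
        · have hk2 : j.1 - s < 2 := by have := j.2; omega
          have hki : (⟨j.1 - s, hk2⟩ : Fin 2) < i := by
            rw [Fin.lt_def]; simp; omega
          have hwj : w' j = a ⟨j.1 - s, hk2⟩ := by simp [hw', glueWord, hjs]
          rw [hwj, h1 _ hki]
          show w (embLast s _) = w j
          congr 1
          ext
          simp [embLast]; omega
      · rw [hw'e i]; exact h2
      · rw [hw'e i]; exact h3
      · intro j hj
        rw [Fin.lt_def] at hj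
        simp only [embLast] at hj
        have hjs : ¬ j.1 < s := by omega
        have hk2 : j.1 - s < 2 := by have := j.2; omega
        have hik : i < (⟨j.1 - s, hk2⟩ : Fin 2) := by
          rw [Fin.lt_def]; simp; omega
        obtain ⟨ha1, ha2⟩ := h4 _ hik
        constructor
        · have hwj : w' j = a ⟨j.1 - s, hk2⟩ := by simp [hw', glueWord, hjs]
          rw [hwj, ha1]; rfl
        · have hjw : w j = (w ∘ embLast s) ⟨j.1 - s, hk2⟩ := by
            show w j = w (embLast s _)
            congr 1
            ext
            simp [embLast]; omega
          rw [hjw, ha2, hw'e i]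

/-- If `ξ(S_G²) = ι(S_G²)` and `t ≥ 2`, then `ι(S_G^t) ≤ ι(S_G²) · n(G)^{t−2}`. -/
theorem isolation_sierpinski_le_isolation_mul
    {V : Type*} [Fintype V] (G : SimpleGraph V) (t : ℕ) (ht : 2 ≤ t)
    (hxi : xiNum G = isolationNum (sierpinskiGraph G 2)) :
    isolationNum (sierpinskiGraph G t) ≤
      isolationNum (sierpinskiGraph G 2) * Fintype.card V ^ (t - 2) := by
  obtain ⟨s, rfl⟩ : ∃ s, t = s + 2 := ⟨t - 2, by omega⟩
  -- Step 1: obtain a minimum dominating set of `S_G²`.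
  have hdom_ne : {n | ∃ D : Set (Fin 2 → V),
      IsDominating (sierpinskiGraph G 2) D ∧ D.ncard = n}.Nonempty := by
    refine ⟨(Set.univ : Set (Fin 2 → V)).ncard, Set.univ, ?_, rfl⟩
    rw [IsDominating, Set.eq_univ_iff_forall]
    exact fun v => Or.inl trivial
  obtain ⟨D₀, hD₀dom, hD₀card⟩ := Nat.sInf_mem hdom_ne
  replace hD₀dom : closedNbhd (sierpinskiGraph G 2) D₀ = Set.univ := hD₀dom
  -- Step 2: the set defining `xiNum` is nonempty, so it has a witness `D` with
  -- `D.ncard = xiNum G = ι(S_G²)`.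
  have hxi_ne : {n | ∃ D : Set (Fin 2 → V), IsIsolating (sierpinskiGraph G 2) D ∧
      D.ncard ≤ dominationNum (sierpinskiGraph G 2) ∧
      (∀ i j : V, ((fun _ => i) : Fin 2 → V) ∉ closedNbhd (sierpinskiGraph G 2) D →
        ((fun _ => j) : Fin 2 → V) ∉ closedNbhd (sierpinskiGraph G 2) D → ¬ G.Adj i j) ∧
      D.ncard = n}.Nonempty := by
    refine ⟨D₀.ncard, D₀, ?_, le_of_eq hD₀card, ?_, rfl⟩
    · intro u hu
      rw [Set.mem_compl_iff, hD₀dom] at hu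
      exact absurd trivial hu
    · intro i j hi _
      rw [hD₀dom] at hi
      exact absurd trivial hi
  have hxmem : ∃ D : Set (Fin 2 → V), IsIsolating (sierpinskiGraph G 2) D ∧
      D.ncard ≤ dominationNum (sierpinskiGraph G 2) ∧
      (∀ i j : V, ((fun _ => i) : Fin 2 → V) ∉ closedNbhd (sierpinskiGraph G 2) D →
        ((fun _ => j) : Fin 2 → V) ∉ closedNbhd (sierpinskiGraph G 2) D → ¬ G.Adj i j) ∧
      D.ncard = xiNum G := Nat.sInf_mem hxi_ne
  obtain ⟨D, hDiso, -, hDext, hDcard⟩ := hxmem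
  have hDcard' : D.ncard = isolationNum (sierpinskiGraph G 2) := by rw [hDcard, hxi]
  -- Step 3: the lifted set.
  set A : Set (Fin (s + 2) → V) := {u : Fin (s + 2) → V | u ∘ embLast s ∈ D} with hA
  have hproj : ∀ w : Fin (s + 2) → V, w ∉ closedNbhd (sierpinskiGraph G (s + 2)) A →
      (w ∘ embLast s) ∉ closedNbhd (sierpinskiGraph G 2) D :=
    fun w hw hc => hw (lift_mem_closedNbhd G D s w hc)
  -- Step 4: `A` is isolating in `S_G^{s+2}`.
  have hAiso : IsIsolating (sierpinskiGraph G (s + 2)) A := by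
    intro u hu v hv hadj
    rw [Set.mem_compl_iff] at hu hv
    have hu' := hproj u hu
    have hv' := hproj v hv
    obtain ⟨i, h1, h2, h3, h4⟩ := hadj
    by_cases his : i.1 < s
    · -- both projections are extreme vertices joined by an edge of `G`
      have hue : u ∘ embLast s = fun _ => v i := by
        funext k
        exact (h4 (embLast s k) (by rw [Fin.lt_def]; simp [embLast]; omega)).1
      have hve : v ∘ embLast s = fun _ => u i := by
        funext k
        exact (h4 (embLast s k) (by rw [Fin.lt_def]; simp [embLast]; omega)).2
      rw [hue] at hu'
      rw [hve] at hv'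
      exact hDext (v i) (u i) hu' hv' h3.symm
    · -- the projections are adjacent in `S_G²`
      have hadj2 : (sierpinskiGraph G 2).Adj (u ∘ embLast s) (v ∘ embLast s) := by
        have hi2 : i.1 = s ∨ i.1 = s + 1 := by have := i.2; omega
        rcases hi2 with hi0 | hi1
        · have hie : embLast s ⟨0, by omega⟩ = i := by ext; simp [embLast, hi0]
          refine ⟨⟨0, by omega⟩, ?_, ?_, ?_, ?_⟩
          · intro j hj
            rw [Fin.lt_def] at hj
            exact absurd hj (by simp)
          · show u (embLast s _) ≠ v (embLast s _)
            rw [hie]; exact h2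
          · show G.Adj (u (embLast s _)) (v (embLast s _))
            rw [hie]; exact h3
          · intro j hj
            rw [Fin.lt_def] at hj
            have hji : i < embLast s j := by
              rw [Fin.lt_def]; simp [embLast, hi0]; omega
            obtain ⟨ha1, ha2⟩ := h4 _ hji
            constructor
            · show u (embLast s j) = v (embLast s _)
              rw [hie]; exact ha1
            · show v (embLast s j) = u (embLast s _)
              rw [hie]; exact ha2
        · have hie : embLast s ⟨1, by omega⟩ = i := by ext; simp [embLast, hi1]
          refine ⟨⟨1, by omega⟩, ?_, ?_, ?_, ?_⟩
          · intro j hj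
            rw [Fin.lt_def] at hj
            have hji : embLast s j < i := by
              rw [Fin.lt_def]; simp [embLast, hi1]; omega
            exact h1 _ hji
          · show u (embLast s _) ≠ v (embLast s _)
            rw [hie]; exact h2
          · show G.Adj (u (embLast s _)) (v (embLast s _))
            rw [hie]; exact h3
          · intro j hj
            rw [Fin.lt_def] at hj
            exact absurd hj (by have := j.2; simp; omega)
      exact hDiso _ hu' _ hv' hadj2
  -- Step 5: the cardinality of `A`.
  have hAcard : A.ncard = D.ncard * Fintype.card V ^ s := by
    classical
    have e1 : A ≃ (Fin s → V) × D :=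
      { toFun := fun u => (fun j => u.1 ⟨j.1, by have := j.2; omega⟩, ⟨u.1 ∘ embLast s, u.2⟩)
        invFun := fun p => ⟨glueWord s p.1 p.2.1, by
          show glueWord s p.1 p.2.1 ∘ embLast s ∈ D
          rw [glueWord_comp]; exact p.2.2⟩
        left_inv := by
          rintro ⟨u, hu⟩
          apply Subtype.ext
          funext j
          by_cases h : j.1 < s
          · simp [glueWord, h]
          · show glueWord s _ _ j = u j
            rw [glueWord, dif_neg h]
            show u (embLast s _) = u j
            congr 1
            ext
            simp [embLast]
            omega
        right_inv := by
          rintro ⟨p, d, hd⟩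
          refine Prod.ext ?_ ?_
          · funext j
            show glueWord s p d ⟨j.1, _⟩ = p j
            rw [glueWord, dif_pos j.2]
          · apply Subtype.ext
            exact glueWord_comp s p d }
    rw [← Nat.card_coe_set_eq, Nat.card_congr e1, Nat.card_prod,
      ← Nat.card_coe_set_eq, Nat.card_eq_fintype_card, Fintype.card_fun,
      Fintype.card_fin, mul_comm]
  -- Conclusion.
  calc isolationNum (sierpinskiGraph G (s + 2)) ≤ A.ncard := Nat.sInf_le ⟨A, hAiso, rfl⟩
    _ = D.ncard * Fintype.card V ^ s := hAcard
    _ = isolationNum (sierpinskiGraph G 2) * Fintype.card V ^ (s + 2 - 2) := by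
        rw [hDcard', Nat.add_sub_cancel]
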